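/- Let G be the graph product of a finite simple graph Γ = (V,E) with vertex groups (G_v)_{v∈V}, and let P be a modular partition of Γ, with quotient graph Γ̄ = (V̄, Ē) whose vertices are the partition classes A ∈ P and whose edges are the pairs {A,B} such that some (equivalently, every) a ∈ A and b ∈ B are adjacent in Γ. Then G is isomorphic to the graph product of Γ̄ with vertex groups (G(A))_{A∈P}; more precisely, the subgroups G(A) of G generate G and satisfy the defining relations of the graph product over Γ̄, and the induced homomorphism from that graph product to G is an isomorphism. -/

import Mathlib

open Monoid

/-- The set of commutator relators defining a graph product. -/
def graphProdRels {V : Type*} (Γ : SimpleGraph V) (G : V → Type*) [∀ v, Group (G v)] :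
    Set (CoprodI G) :=
  {x | ∃ (u v : V) (_ : Γ.Adj u v) (g : G u) (h : G v),
    x = (CoprodI.of g)⁻¹ * (CoprodI.of h)⁻¹ * CoprodI.of g * CoprodI.of h}

/-- The graph product of the graph of groups `(Γ, G)`: the quotient of the free product of the
vertex groups by the normal closure of the commutators of elements of pairs of adjacent vertex
groups. -/
def GraphProduct {V : Type*} (Γ : SimpleGraph V) (G : V → Type*) [∀ v, Group (G v)] : Type _ :=
  CoprodI G ⧸ Subgroup.normalClosure (graphProdRels Γ G)

instance {V : Type*} (Γ : SimpleGraph V) (G : V → Type*) [∀ v, Group (G v)] :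
    Group (GraphProduct Γ G) :=
  QuotientGroup.Quotient.group _

/-- The canonical map from a vertex group into the graph product. -/
def GraphProduct.of {V : Type*} (Γ : SimpleGraph V) (G : V → Type*) [∀ v, Group (G v)] (v : V) :
    G v →* GraphProduct Γ G :=
  (QuotientGroup.mk' _).comp CoprodI.of

/-- `G(A)`: the subgroup of the graph product generated by the images of the vertex groups
`G_a`, `a ∈ A`. -/
def GraphProduct.vsub {V : Type*} (Γ : SimpleGraph V) (G : V → Type*) [∀ v, Group (G v)]
    (A : Set V) : Subgroup (GraphProduct Γ G) :=
  ⨆ a ∈ A, (GraphProduct.of Γ G a).range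


section Aux

variable {V : Type*} (Γ : SimpleGraph V) (G : V → Type*) [∀ v, Group (G v)]

theorem GraphProduct.commute_of {u v : V} (h : Γ.Adj u v) (g : G u) (k : G v) :
    Commute (GraphProduct.of Γ G u g) (GraphProduct.of Γ G v k) := by
  have hmem : ((CoprodI.of g)⁻¹ * (CoprodI.of k)⁻¹ * CoprodI.of g * CoprodI.of k : CoprodI G) ∈
      Subgroup.normalClosure (graphProdRels Γ G) :=
    Subgroup.subset_normalClosure ⟨u, v, h, g, k, rfl⟩
  have h1 : (QuotientGroup.mk' (Subgroup.normalClosure (graphProdRels Γ G)))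
      ((CoprodI.of g)⁻¹ * (CoprodI.of k)⁻¹ * CoprodI.of g * CoprodI.of k) = 1 :=
    (QuotientGroup.eq_one_iff _).2 hmem
  have h2 : ((GraphProduct.of Γ G u g)⁻¹ * (GraphProduct.of Γ G v k)⁻¹ *
      GraphProduct.of Γ G u g * GraphProduct.of Γ G v k : GraphProduct Γ G) = 1 := by
    simp only [map_mul, map_inv] at h1
    exact h1
  have h3 : Commute (GraphProduct.of Γ G u g)⁻¹ (GraphProduct.of Γ G v k)⁻¹ := by
    rw [← commutatorElement_eq_one_iff_commute]
    simpa [commutatorElement_def, mul_assoc] using h2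
  simpa using h3.inv_inv

/-- Universal property of the graph product. -/
def GraphProduct.lift {M : Type*} [Group M] (f : ∀ v, G v →* M)
    (hf : ∀ u v, Γ.Adj u v → ∀ (g : G u) (k : G v), Commute (f u g) (f v k)) :
    GraphProduct Γ G →* M :=
  QuotientGroup.lift _ (CoprodI.lift f) (by
    intro x hx
    have : Subgroup.normalClosure (graphProdRels Γ G) ≤ (CoprodI.lift f).ker := by
      apply Subgroup.normalClosure_le_normal
      rintro x ⟨u, v, huv, g, k, rfl⟩
      simp only [SetLike.mem_coe, MonoidHom.mem_ker, map_mul, map_inv, CoprodI.lift_of]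
      have h := commutatorElement_eq_one_iff_commute.2 (hf u v huv g k).inv_inv
      simpa [commutatorElement_def, mul_assoc] using h
    exact this hx)

@[simp] theorem GraphProduct.lift_of {M : Type*} [Group M] (f : ∀ v, G v →* M)
    (hf : ∀ u v, Γ.Adj u v → ∀ (g : G u) (k : G v), Commute (f u g) (f v k))
    (v : V) (g : G v) :
    GraphProduct.lift Γ G f hf (GraphProduct.of Γ G v g) = f v g := by
  rfl

theorem GraphProduct.hom_ext {M : Type*} [Monoid M] {f g : GraphProduct Γ G →* M}
    (h : ∀ v, f.comp (GraphProduct.of Γ G v) = g.comp (GraphProduct.of Γ G v)) : f = g := by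
  apply QuotientGroup.monoidHom_ext
  apply CoprodI.ext_hom
  intro v
  ext x
  exact DFunLike.congr_fun (h v) x

theorem GraphProduct.of_mem_vsub {A : Set V} {v : V} (hv : v ∈ A) (g : G v) :
    GraphProduct.of Γ G v g ∈ GraphProduct.vsub Γ G A := by
  have : (GraphProduct.of Γ G v).range ≤ GraphProduct.vsub Γ G A := by
    apply le_iSup₂_of_le v hv le_rfl
  exact this ⟨g, rfl⟩

end Aux

/-- Let `P` be a modular partition of `Γ`, with quotient graph `ΓQ` on the
partition classes, two classes being adjacent iff some (equivalently, by modularity, every) pair of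
representatives is adjacent in `Γ`.  Then `G` is the graph product of `(ΓQ, G(A))`: there is a
homomorphism from the graph product of the quotient graph of groups to `G` restricting to the
inclusion on each `G(A)` (so the subgroups `G(A)` generate `G` and satisfy the graph product
relations over `ΓQ`), and this homomorphism is an isomorphism. -/
theorem graphProduct_modular_partition {V : Type*} [Fintype V] (Γ : SimpleGraph V)
    (G : V → Type*) [∀ v, Group (G v)]
    (P : Set (Set V)) (hpart : Setoid.IsPartition P)
    (hmod : ∀ X ∈ P, ∀ v ∉ X, (∀ x ∈ X, Γ.Adj v x) ∨ (∀ x ∈ X, ¬ Γ.Adj v x))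
    (ΓQ : SimpleGraph P)
    (hadj : ∀ A B : P, ΓQ.Adj A B ↔
      (A ≠ B ∧ ∃ a ∈ (A : Set V), ∃ b ∈ (B : Set V), Γ.Adj a b)) :
    ∃ φ : GraphProduct ΓQ (fun A : P => GraphProduct.vsub Γ G (A : Set V)) →* GraphProduct Γ G,
      (∀ (A : P) (x : GraphProduct.vsub Γ G (A : Set V)),
        φ (GraphProduct.of ΓQ (fun B : P => GraphProduct.vsub Γ G (B : Set V)) A x) = x) ∧
      Function.Bijective φ := by
  classical
  -- the class of a vertex
  have hC : ∀ v : V, ∃ A : P, v ∈ (A : Set V) := by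
    intro v
    obtain ⟨B, ⟨hBP, hvB⟩, _⟩ := hpart.2 v
    exact ⟨⟨B, hBP⟩, hvB⟩
  choose C hCmem using hC
  have hCuniq : ∀ (v : V) (A : P), v ∈ (A : Set V) → C v = A := by
    intro v A hvA
    obtain ⟨B, _, hBu⟩ := hpart.2 v
    have h1 : ((C v : Set V)) = B := hBu _ ⟨(C v).2, hCmem v⟩
    have h2 : ((A : Set V)) = B := hBu _ ⟨A.2, hvA⟩
    exact Subtype.ext (h1.trans h2.symm)
  -- modularity: adjacency of classes spreads to all representatives
  have hall : ∀ (A B : P), ΓQ.Adj A B → ∀ a ∈ (A : Set V), ∀ b ∈ (B : Set V), Γ.Adj a b := by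
    intro A B hAB a ha b hb
    obtain ⟨hne, a0, ha0, b0, hb0, hab0⟩ := (hadj A B).1 hAB
    have hdisj : ∀ x ∈ (B : Set V), x ∉ (A : Set V) := by
      intro x hxB hxA
      exact hne ((hCuniq x A hxA).symm.trans (hCuniq x B hxB))
    -- b0 is adjacent to everything in A
    have hb0A : ∀ x ∈ (A : Set V), Γ.Adj b0 x := by
      rcases hmod (A : Set V) A.2 b0 (hdisj b0 hb0) with h | h
      · exact h
      · exact absurd hab0.symm (h a0 ha0)
    -- a is adjacent to everything in B
    have haB : ∀ x ∈ (B : Set V), Γ.Adj a x := by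
      have haA : a ∉ (B : Set V) := by
        intro haB'
        exact hne.symm ((hCuniq a B haB').symm.trans (hCuniq a A ha))
      rcases hmod (B : Set V) B.2 a haA with h | h
      · exact h
      · exact absurd (hb0A a ha).symm (h b0 hb0)
    exact haB b hb
  -- elements of vsub A and vsub B commute for adjacent classes
  have hcomm : ∀ (A B : P), ΓQ.Adj A B → ∀ x ∈ GraphProduct.vsub Γ G (A : Set V),
      ∀ y ∈ GraphProduct.vsub Γ G (B : Set V), Commute x y := by
    intro A B hAB x hx y hy
    have h1 : GraphProduct.vsub Γ G (A : Set V) ≤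
        Subgroup.centralizer (GraphProduct.vsub Γ G (B : Set V) : Set (GraphProduct Γ G)) := by
      refine iSup₂_le fun a ha => ?_
      rintro _ ⟨g, rfl⟩
      rw [Subgroup.mem_centralizer_iff]
      intro z hz
      have h2 : GraphProduct.vsub Γ G (B : Set V) ≤
          Subgroup.centralizer {GraphProduct.of Γ G a g} := by
        refine iSup₂_le fun b hb => ?_
        rintro _ ⟨k, rfl⟩
        rw [Subgroup.mem_centralizer_iff]
        rintro _ rfl
        exact (GraphProduct.commute_of Γ G (hall A B hAB a ha b hb) g k).eq
      exact (Subgroup.mem_centralizer_iff.1 (h2 hz) _ rfl).symm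
    exact Commute.symm (Subgroup.mem_centralizer_iff.1 (h1 hx) y hy)
  -- the forward map
  set GQ : P → Type _ := fun A : P => GraphProduct.vsub Γ G (A : Set V) with hGQ
  refine ⟨GraphProduct.lift ΓQ GQ (fun A => (GraphProduct.vsub Γ G (A : Set V)).subtype)
      (fun A B hAB g k => hcomm A B hAB g g.2 k k.2), fun A x => GraphProduct.lift_of .., ?_⟩
  -- the inverse map
  set φ := GraphProduct.lift ΓQ GQ (fun A => (GraphProduct.vsub Γ G (A : Set V)).subtype)
      (fun A B hAB g k => hcomm A B hAB g g.2 k k.2) with hφ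
  have hψc : ∀ u v, Γ.Adj u v → ∀ (g : G u) (k : G v),
      Commute ((GraphProduct.of ΓQ GQ (C u)).comp
          ((GraphProduct.of Γ G u).codRestrict _ (fun g => GraphProduct.of_mem_vsub Γ G (hCmem u) g)) g)
        ((GraphProduct.of ΓQ GQ (C v)).comp
          ((GraphProduct.of Γ G v).codRestrict _ (fun k => GraphProduct.of_mem_vsub Γ G (hCmem v) k)) k) := by
    intro u v huv g k
    by_cases hcv : C u = C v
    · -- same class: the elements already commute inside the subgroup
      simp only [MonoidHom.comp_apply]
      have hgu : GraphProduct.of Γ G u g ∈ GraphProduct.vsub Γ G ((C v : P) : Set V) := by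
        rw [← hcv]; exact GraphProduct.of_mem_vsub Γ G (hCmem u) g
      have h1 : ((GraphProduct.of Γ G u).codRestrict _
            (fun g => GraphProduct.of_mem_vsub Γ G (hCmem u) g) g : GraphProduct Γ G) =
          GraphProduct.of Γ G u g := rfl
      have hsub : Commute (⟨GraphProduct.of Γ G u g, hgu⟩ : GQ (C v))
          ((GraphProduct.of Γ G v).codRestrict _ (fun k => GraphProduct.of_mem_vsub Γ G (hCmem v) k) k) := by
        have h2 : Commute (GraphProduct.of Γ G u g) (GraphProduct.of Γ G v k) :=
          GraphProduct.commute_of Γ G huv g k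
        exact Subtype.ext h2.eq
      have key : ∀ (A B : P) (h : A = B) (x : GraphProduct Γ G)
          (hxA : x ∈ GraphProduct.vsub Γ G (A : Set V)) (hxB : x ∈ GraphProduct.vsub Γ G (B : Set V)),
          GraphProduct.of ΓQ GQ A ⟨x, hxA⟩ = GraphProduct.of ΓQ GQ B ⟨x, hxB⟩ := by
        rintro A B rfl x hxA hxB; rfl
      have hleft : GraphProduct.of ΓQ GQ (C u)
          ((GraphProduct.of Γ G u).codRestrict _ (fun g => GraphProduct.of_mem_vsub Γ G (hCmem u) g) g) =
          GraphProduct.of ΓQ GQ (C v) ⟨GraphProduct.of Γ G u g, hgu⟩ :=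
        key (C u) (C v) hcv _ _ _
      rw [hleft]
      exact hsub.map (GraphProduct.of ΓQ GQ (C v))
    · -- different classes: they are adjacent in the quotient graph
      have hadjQ : ΓQ.Adj (C u) (C v) := by
        rw [hadj]
        exact ⟨hcv, u, hCmem u, v, hCmem v, huv⟩
      exact GraphProduct.commute_of ΓQ GQ hadjQ _ _
  set ψ : GraphProduct Γ G →* GraphProduct ΓQ GQ := GraphProduct.lift Γ G
      (fun v => (GraphProduct.of ΓQ GQ (C v)).comp
        ((GraphProduct.of Γ G v).codRestrict _ (fun g => GraphProduct.of_mem_vsub Γ G (hCmem v) g)))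
      hψc with hψ
  -- φ ∘ ψ = id
  have hφψ : φ.comp ψ = MonoidHom.id _ := by
    apply GraphProduct.hom_ext
    intro v
    ext g
    simp [hψ, hφ]
    rfl
  -- ψ preserves vsub A pointwise
  have hψvsub : ∀ (A : P) (y : GraphProduct Γ G) (hy : y ∈ GraphProduct.vsub Γ G (A : Set V)),
      ψ y = GraphProduct.of ΓQ GQ A ⟨y, hy⟩ := by
    intro A
    have hrw : GraphProduct.vsub Γ G (A : Set V) =
        ⨆ a : (A : Set V), (GraphProduct.of Γ G (a : V)).range := by
      rw [GraphProduct.vsub, iSup_subtype']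
    intro y hy
    rw [hrw] at hy
    refine Subgroup.iSup_induction'
      (C := fun y hy => ψ y = GraphProduct.of ΓQ GQ A ⟨y, hrw ▸ hy⟩) _ ?_ ?_ ?_ hy
    · rintro ⟨a, ha⟩ _ ⟨g, rfl⟩
      have hCa : C a = A := hCuniq a A ha
      have : ψ (GraphProduct.of Γ G a g) = GraphProduct.of ΓQ GQ (C a)
          ⟨GraphProduct.of Γ G a g, GraphProduct.of_mem_vsub Γ G (hCmem a) g⟩ :=
        GraphProduct.lift_of ..
      rw [this]
      subst hCa
      rfl
    · exact (map_one _).symm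
    · intro x y hx hy ihx ihy
      rw [map_mul, ihx, ihy, ← map_mul]
      rfl
  -- ψ ∘ φ = id
  have hψφ : ψ.comp φ = MonoidHom.id _ := by
    apply GraphProduct.hom_ext
    intro A
    ext x
    have h1 : φ (GraphProduct.of ΓQ GQ A x) = (x : GraphProduct Γ G) :=
      GraphProduct.lift_of ..
    simp only [MonoidHom.comp_apply, MonoidHom.id_apply, h1]
    rw [hψvsub A x x.2]
  constructor
  · intro a b hab
    have := congrArg ψ hab
    calc a = (ψ.comp φ) a := by rw [hψφ]; rfl
    _ = (ψ.comp φ) b := this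
    _ = b := by rw [hψφ]; rfl
  · intro y
    exact ⟨ψ y, by have := DFunLike.congr_fun hφψ y; simpa using this⟩
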